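/- For every α ∈ ℂ, the algebra 𝔠₁₆(α) on ℂ⁵ with nonzero basis products e₁e₁ = e₂, e₁e₂ = e₄, e₁e₄ = (α+1)e₅, e₂e₂ = α e₅, e₃e₃ = e₄ is a nilpotent commutative algebra (A⁶ = 0) that satisfies the almost-Jordan identity 2·(((y·x)·x)·x) + y·((x·x)·x) = 3·((y·(x·x))·x) for all x, y, but does not satisfy the Jordan identity: there exist x, y with ((x·x)·y)·x ≠ (x·x)·(y·x). -/

import Mathlib

/-- `IsProdOf μ n z` says that `z` is a product of `n` elements under the
multiplication `μ`, with some arrangement of parentheses. -/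
inductive IsProdOf {V : Type*} (μ : V → V → V) : ℕ → V → Prop
  | base (x : V) : IsProdOf μ 1 x
  | mul {m n : ℕ} {a b : V} :
      IsProdOf μ m a → IsProdOf μ n b → IsProdOf μ (m + n) (μ a b)

/-- Structure constants of the algebra 𝔠₁₆(α) (e₁e₁ = e₂, e₁e₂ = e₄, e₁e₄ = (α+1)e₅, e₂e₂ = α e₅, e₃e₃ = e₄) on ℂ⁵ (basis `e₁, …, e₅` indexed by `Fin 5`),
extended symmetrically; unlisted products of basis vectors are zero. -/
noncomputable def tbl16 (α : ℂ) : Fin 5 → Fin 5 → Fin 5 → ℂ :=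
  ![![![0,1,0,0,0], ![0,0,0,1,0], 0, ![0,0,0,0,α+1], 0],
    ![![0,0,0,1,0], ![0,0,0,0,α], 0, 0, 0],
    ![0, 0, ![0,0,0,1,0], 0, 0],
    ![![0,0,0,0,α+1], 0, 0, 0, 0],
    0]

/-- The bilinear multiplication of the algebra on ℂ⁵. -/
noncomputable def mul16 (α : ℂ) (x y : Fin 5 → ℂ) : Fin 5 → ℂ :=
  fun k => ∑ i, ∑ j, x i * y j * tbl16 α i j k

set_option maxHeartbeats 1600000

lemma mul16_eq (α : ℂ) (x y : Fin 5 → ℂ) :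
    mul16 α x y = ![0, x 0 * y 0, 0, x 0 * y 1 + x 1 * y 0 + x 2 * y 2,
      (α+1) * (x 0 * y 3) + α * (x 1 * y 1) + (α+1) * (x 3 * y 0)] := by
  funext k
  fin_cases k <;>
    simp [mul16, tbl16, Fin.sum_univ_five, Matrix.vecHead, Matrix.vecTail] <;> ring

lemma isProdOf_pos {V : Type*} {μ : V → V → V} {n : ℕ} {z : V}
    (h : IsProdOf μ n z) : 1 ≤ n := by
  induction h with
  | base => omega
  | mul _ _ ih1 ih2 => omega

lemma key (α : ℂ) {n : ℕ} {z : Fin 5 → ℂ} (h : IsProdOf (mul16 α) n z) :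
    (2 ≤ n → z 0 = 0 ∧ z 2 = 0) ∧ (3 ≤ n → z 1 = 0) ∧ (4 ≤ n → z 3 = 0) ∧
    (5 ≤ n → z 4 = 0) := by
  induction h with
  | base x => refine ⟨fun h => ?_, fun h => ?_, fun h => ?_, fun h => ?_⟩ <;> omega
  | @mul m n a b ha hb iha ihb =>
    have hm := isProdOf_pos ha
    have hn := isProdOf_pos hb
    obtain ⟨a2, a3, a4, a5⟩ := iha
    obtain ⟨b2, b3, b4, b5⟩ := ihb
    rw [mul16_eq]
    refine ⟨fun _ => ⟨rfl, rfl⟩, fun h => ?_, fun h => ?_, fun h => ?_⟩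
    · -- z 1 = a 0 * b 0, need m + n ≥ 3
      show a 0 * b 0 = 0
      rcases le_or_gt 2 m with hm2 | hm2
      · rw [(a2 hm2).1, zero_mul]
      · rw [(b2 (by omega)).1, mul_zero]
    · show a 0 * b 1 + a 1 * b 0 + a 2 * b 2 = 0
      rcases le_or_gt 2 m with hm2 | hm2
      · obtain ⟨ha0, ha2⟩ := a2 hm2
        rcases le_or_gt 2 n with hn2 | hn2
        · rw [ha0, ha2, (b2 hn2).1, zero_mul, mul_zero, zero_mul]; ring
        · rw [ha0, ha2, a3 (by omega), zero_mul, zero_mul, zero_mul]; ring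
      · rw [(b2 (by omega)).1, (b2 (by omega)).2, b3 (by omega), mul_zero, mul_zero,
          mul_zero]; ring
    · show (α+1) * (a 0 * b 3) + α * (a 1 * b 1) + (α+1) * (a 3 * b 0) = 0
      rcases le_or_gt 2 m with hm2 | hm2
      · obtain ⟨ha0, -⟩ := a2 hm2
        rcases le_or_gt 2 n with hn2 | hn2
        · -- m,n ≥ 2, m+n ≥ 5 so m ≥ 3 or n ≥ 3
          obtain ⟨hb0, -⟩ := b2 hn2
          rcases le_or_gt 3 m with hm3 | hm3
          · rw [ha0, a3 hm3, hb0, zero_mul, zero_mul, mul_zero]; ring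
          · rw [ha0, b3 (by omega), hb0, zero_mul, mul_zero, mul_zero]; ring
        · rw [ha0, a3 (by omega), a4 (by omega), zero_mul, zero_mul, zero_mul]; ring
      · rw [(b2 (by omega)).1, b3 (by omega), b4 (by omega), mul_zero, mul_zero,
          mul_zero]; ring

/-- The algebra is nilpotent (A⁶ = 0), commutative, satisfies the almost-Jordan identity, but does not satisfy the Jordan identity. -/
theorem c16_properties (α : ℂ) :
    (∀ x y : Fin 5 → ℂ, mul16 α x y = mul16 α y x) ∧
    (∀ z : Fin 5 → ℂ, IsProdOf (mul16 α) 6 z → z = 0) ∧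
    (∀ x y : Fin 5 → ℂ,
        (2 : ℂ) • mul16 α (mul16 α (mul16 α y x) x) x + mul16 α y (mul16 α (mul16 α x x) x) =
          (3 : ℂ) • mul16 α (mul16 α y (mul16 α x x)) x) ∧
    (∃ x y : Fin 5 → ℂ,
        mul16 α (mul16 α (mul16 α x x) y) x ≠ mul16 α (mul16 α x x) (mul16 α y x)) := by
  refine ⟨fun x y => ?_, fun z hz => ?_, fun x y => ?_, ?_⟩
  · rw [mul16_eq, mul16_eq]
    funext k; fin_cases k <;> simp <;> ring
  · obtain ⟨h2, h3, h4, h5⟩ := key α hz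
    obtain ⟨h0, hh2⟩ := h2 (by omega)
    funext k
    fin_cases k
    · exact h0
    · exact h3 (by omega)
    · exact hh2
    · exact h4 (by omega)
    · exact h5 (by omega)
  · funext k
    fin_cases k <;>
      · simp only [mul16_eq, Pi.add_apply, Pi.smul_apply, smul_eq_mul]
        simp
        try ring
  · refine ⟨![1,0,0,0,0], ![1,0,0,0,0], fun h => ?_⟩
    have := congrFun h 4
    simp only [mul16_eq] at this
    simp at this
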